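/- Let n,a,b,c,m be positive integers and x∈ℝ. Suppose f:(-∞,0]²→ℂ^{n×a} and f':(-∞,0]²→ℂ^{c×m} are continuous and square-integrable, and h:ℝ→ℂ^{a×b}, h':ℝ→ℂ^{b×c} are continuously differentiable with h(s)→0 and h'(s)→0 as s→-∞, and assume all the integrals below converge absolutely (e.g. f,f',h,h',h'·(derivatives) suitably integrable). Then for all y,z∈(-∞,0]: ∫_{-∞}^0∫_{-∞}^0∫_{-∞}^0 f(y,ξ₁)·∂ₓ[h(ξ₁+ξ₂+x)h'(ξ₂+ξ₃+x)]·f'(ξ₃,z) dξ₃ dξ₂ dξ₁ = (∫_{-∞}^0 f(y,ξ)h(ξ+x)dξ)·(∫_{-∞}^0 h'(ξ+x)f'(ξ,z)dξ). In particular, setting y=z=0 gives the corresponding scalar-argument ('trace') identity. -/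

import Mathlib

open MeasureTheory Real Set Matrix Filter

attribute [local instance] Matrix.frobeniusNormedAddCommGroup Matrix.frobeniusNormedSpace

noncomputable def mulCLM (p q r : ℕ) :
    Matrix (Fin p) (Fin q) ℂ →L[ℝ] Matrix (Fin q) (Fin r) ℂ →L[ℝ] Matrix (Fin p) (Fin r) ℂ :=
  LinearMap.toContinuousLinearMap
  { toFun := fun A => LinearMap.toContinuousLinearMap
      { toFun := fun B => A * B
        map_add' := fun B C => Matrix.mul_add A B C
        map_smul' := fun cc B => Matrix.mul_smul A cc B }
    map_add' := fun A A' => by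
      apply ContinuousLinearMap.ext; intro B
      show (A + A') * B = A * B + A' * B
      rw [Matrix.add_mul]
    map_smul' := fun cc A => by
      apply ContinuousLinearMap.ext; intro B
      show (cc • A) * B = cc • (A * B)
      rw [Matrix.smul_mul] }

@[simp] lemma mulCLM_apply {p q r : ℕ} (A : Matrix (Fin p) (Fin q) ℂ)
    (B : Matrix (Fin q) (Fin r) ℂ) : mulCLM p q r A B = A * B := rfl

set_option maxHeartbeats 1000000 in
lemma HasDerivAt.matMul {p q r : ℕ} {u : ℝ → Matrix (Fin p) (Fin q) ℂ}
    {v : ℝ → Matrix (Fin q) (Fin r) ℂ} {u' : Matrix (Fin p) (Fin q) ℂ}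
    {v' : Matrix (Fin q) (Fin r) ℂ} {t : ℝ}
    (hu : HasDerivAt u u' t) (hv : HasDerivAt v v' t) :
    HasDerivAt (fun t => u t * v t) (u' * v t + u t * v') t := by
  have hu1 : ∀ i, HasDerivAt (fun t => u t i) (u' i) t := hasDerivAt_pi.mp (by exact hu)
  have hv1 : ∀ i, HasDerivAt (fun t => v t i) (v' i) t := hasDerivAt_pi.mp (by exact hv)
  have X : ∀ i j, HasDerivAt (fun t => (u t * v t) i j) ((u' * v t + u t * v') i j) t := by
    intro i j
    simp only [Matrix.mul_apply, Matrix.add_apply]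
    rw [← Finset.sum_add_distrib]
    exact HasDerivAt.fun_sum fun k _ =>
      (hasDerivAt_pi.mp (hu1 i) k).mul (hasDerivAt_pi.mp (hv1 k) j)
  have goal := hasDerivAt_pi.mpr (fun i => hasDerivAt_pi.mpr (X i))
  exact goal

/-- The kernel-bracket product rule for Hankel operators:
`[F ∂ₓ(H H') F'](y,z;x) = [F H](y,0;x) · [H' F'](0,z;x)`. -/
theorem kernel_bracket_product_rule
    (n a b c m : ℕ) (hn : 0 < n) (ha : 0 < a) (hb : 0 < b) (hc : 0 < c) (hm : 0 < m)
    (x : ℝ)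
    (f : ℝ → ℝ → Matrix (Fin n) (Fin a) ℂ) (f' : ℝ → ℝ → Matrix (Fin c) (Fin m) ℂ)
    (h : ℝ → Matrix (Fin a) (Fin b) ℂ) (h' : ℝ → Matrix (Fin b) (Fin c) ℂ)
    (hf_cont : ContinuousOn (fun yz : ℝ × ℝ => f yz.1 yz.2) (Iic 0 ×ˢ Iic 0))
    (hf'_cont : ContinuousOn (fun yz : ℝ × ℝ => f' yz.1 yz.2) (Iic 0 ×ˢ Iic 0))
    (hf_L2 : MemLp (fun yz : ℝ × ℝ => f yz.1 yz.2) 2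
      ((volume.restrict (Iic 0)).prod (volume.restrict (Iic 0))))
    (hf'_L2 : MemLp (fun yz : ℝ × ℝ => f' yz.1 yz.2) 2
      ((volume.restrict (Iic 0)).prod (volume.restrict (Iic 0))))
    (hh : ContDiff ℝ 1 h) (hh' : ContDiff ℝ 1 h')
    (hh0 : Tendsto h atBot (nhds 0)) (hh'0 : Tendsto h' atBot (nhds 0))
    -- absolute convergence of all the integrals below:
    (habs1 : ∀ y ∈ Iic (0:ℝ), ∀ z ∈ Iic (0:ℝ), @Integrable _ _ SeminormedAddGroup.toContinuousENorm _ _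
      (fun ξ : ℝ × ℝ × ℝ =>
        f y ξ.1 * deriv (fun x' => h (ξ.1 + ξ.2.1 + x') * h' (ξ.2.1 + ξ.2.2 + x')) x * f' ξ.2.2 z)
      ((volume.restrict (Iic 0)).prod ((volume.restrict (Iic 0)).prod (volume.restrict (Iic 0)))))
    (habs2 : ∀ y ∈ Iic (0:ℝ),
      @Integrable _ _ SeminormedAddGroup.toContinuousENorm _ _ (fun ξ => f y ξ * h (ξ + x)) (volume.restrict (Iic 0)))
    (habs3 : ∀ z ∈ Iic (0:ℝ),
      @Integrable _ _ SeminormedAddGroup.toContinuousENorm _ _ (fun ξ => h' (ξ + x) * f' ξ z) (volume.restrict (Iic 0)))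
    (habs4 : ∀ s s' : ℝ,
      @Integrable _ _ SeminormedAddGroup.toContinuousENorm _ _ (fun ξ => deriv (fun x' => h (s + ξ + x') * h' (ξ + s' + x')) x)
        (volume.restrict (Iic 0))) :
    ∀ y ∈ Iic (0:ℝ), ∀ z ∈ Iic (0:ℝ),
      (∫ ξ₁ in Iic (0:ℝ), ∫ ξ₂ in Iic (0:ℝ), ∫ ξ₃ in Iic (0:ℝ),
          f y ξ₁ * deriv (fun x' => h (ξ₁ + ξ₂ + x') * h' (ξ₂ + ξ₃ + x')) x * f' ξ₃ z)
        = (∫ ξ in Iic (0:ℝ), f y ξ * h (ξ + x)) * (∫ ξ in Iic (0:ℝ), h' (ξ + x) * f' ξ z) := by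
  intro y hy z hz
  set μ : Measure ℝ := volume.restrict (Iic 0) with hμ
  -- pointwise derivative of the product
  have key : ∀ u v t : ℝ, HasDerivAt (fun t => h (u + t) * h' (v + t))
      (deriv h (u + t) * h' (v + t) + h (u + t) * deriv h' (v + t)) t := by
    intro u v t
    have h1 : HasDerivAt (fun t => h (u + t)) (deriv h (u + t)) t := by
      have h0 := ((hh.differentiable one_ne_zero) (u + t)).hasDerivAt
      have haff : HasDerivAt (fun t : ℝ => u + t) 1 t := by
        simpa using (hasDerivAt_id t).const_add u
      have := h0.scomp t haff; rw [one_smul] at this; exact this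
    have h2 : HasDerivAt (fun t => h' (v + t)) (deriv h' (v + t)) t := by
      have h0 := ((hh'.differentiable one_ne_zero) (v + t)).hasDerivAt
      have haff : HasDerivAt (fun t : ℝ => v + t) 1 t := by
        simpa using (hasDerivAt_id t).const_add v
      have := h0.scomp t haff; rw [one_smul] at this; exact this
    exact h1.matMul h2
  set D : ℝ → ℝ → ℝ → Matrix (Fin a) (Fin c) ℂ := fun s ξ s' =>
    deriv h (s + ξ + x) * h' (ξ + s' + x) + h (s + ξ + x) * deriv h' (ξ + s' + x) with hD
  have derivx : ∀ s ξ s' : ℝ,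
      deriv (fun x' => h (s + ξ + x') * h' (ξ + s' + x')) x = D s ξ s' := fun s ξ s' =>
    (key (s + ξ) (ξ + s') x).deriv
  have hDint : ∀ s s' : ℝ, @Integrable _ _ SeminormedAddGroup.toContinuousENorm _ _ (fun ξ => D s ξ s') μ := by
    intro s s'
    exact (habs4 s s').congr (Filter.Eventually.of_forall fun ξ => derivx s ξ s')
  -- fundamental theorem of calculus
  have ftc : ∀ s s' : ℝ, (∫ ξ in Iic (0:ℝ), D s ξ s') = h (s + x) * h' (s' + x) := by
    intro s s'
    have hG : ∀ ξ ∈ Iic (0:ℝ),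
        HasDerivAt (fun ξ => h (s + ξ + x) * h' (ξ + s' + x)) (D s ξ s') ξ := by
      intro ξ _
      have e1 : ∀ t : ℝ, s + t + x = (s + x) + t := fun t => by ring
      have e2 : ∀ t : ℝ, t + s' + x = (s' + x) + t := fun t => by ring
      have := key (s + x) (s' + x) ξ
      simp only [← e1, ← e2] at this
      exact this
    have t1 : Tendsto (fun ξ : ℝ => h (s + ξ + x)) atBot (nhds 0) := by
      have : Tendsto (fun ξ : ℝ => s + ξ + x) atBot atBot :=
        tendsto_atBot_add_const_right _ x (tendsto_atBot_add_const_left _ s tendsto_id)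
      exact hh0.comp this
    have t2 : Tendsto (fun ξ : ℝ => h' (ξ + s' + x)) atBot (nhds 0) := by
      have : Tendsto (fun ξ : ℝ => ξ + s' + x) atBot atBot :=
        tendsto_atBot_add_const_right _ x (tendsto_atBot_add_const_right _ s' tendsto_id)
      exact hh'0.comp this
    have tmul : Tendsto (fun ξ : ℝ => h (s + ξ + x) * h' (ξ + s' + x)) atBot (nhds 0) := by
      have hc := ((mulCLM a b c).isBoundedBilinearMap.continuous.tendsto
        ((0 : Matrix (Fin a) (Fin b) ℂ), (0 : Matrix (Fin b) (Fin c) ℂ))).comp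
        (t1.prodMk_nhds t2)
      have e : (0 : Matrix (Fin a) (Fin c) ℂ) = mulCLM a b c 0 0 := by
        rw [mulCLM_apply, Matrix.zero_mul]
      rw [e]; exact hc
    have := integral_Iic_of_hasDerivAt_of_tendsto' hG (hDint s s') tmul
    rw [this]
    simp only [add_zero, zero_add, sub_zero]
  -- the kernel of the inner double integral, a.e. in ξ₁
  set C : Matrix (Fin b) (Fin m) ℂ := ∫ ξ in Iic (0:ℝ), h' (ξ + x) * f' ξ z with hC
  have hae : ∀ᵐ ξ₁ ∂μ, @Integrable _ _ SeminormedAddGroup.toContinuousENorm _ _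
      (fun p : ℝ × ℝ => f y ξ₁
        * deriv (fun x' => h (ξ₁ + p.1 + x') * h' (p.1 + p.2 + x')) x * f' p.2 z)
      (μ.prod μ) := (habs1 y hy z hz).prod_right_ae
  have inner_eq : ∀ᵐ ξ₁ ∂μ,
      (∫ ξ₂ in Iic (0:ℝ), ∫ ξ₃ in Iic (0:ℝ),
          f y ξ₁ * deriv (fun x' => h (ξ₁ + ξ₂ + x') * h' (ξ₂ + ξ₃ + x')) x * f' ξ₃ z)
        = (f y ξ₁ * h (ξ₁ + x)) * C := by
    filter_upwards [hae] with ξ₁ hint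
    have swap :
        (∫ ξ₂ in Iic (0:ℝ), ∫ ξ₃ in Iic (0:ℝ),
            f y ξ₁ * deriv (fun x' => h (ξ₁ + ξ₂ + x') * h' (ξ₂ + ξ₃ + x')) x * f' ξ₃ z)
          = ∫ ξ₃ in Iic (0:ℝ), ∫ ξ₂ in Iic (0:ℝ),
            f y ξ₁ * deriv (fun x' => h (ξ₁ + ξ₂ + x') * h' (ξ₂ + ξ₃ + x')) x * f' ξ₃ z :=
      integral_integral_swap hint
    rw [swap]
    have step1 : ∀ ξ₃ : ℝ,
        (∫ ξ₂ in Iic (0:ℝ),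
            f y ξ₁ * deriv (fun x' => h (ξ₁ + ξ₂ + x') * h' (ξ₂ + ξ₃ + x')) x * f' ξ₃ z)
          = (f y ξ₁ * h (ξ₁ + x)) * (h' (ξ₃ + x) * f' ξ₃ z) := by
      intro ξ₃
      set L : Matrix (Fin a) (Fin c) ℂ →L[ℝ] Matrix (Fin n) (Fin m) ℂ :=
        ((mulCLM n c m).flip (f' ξ₃ z)).comp (mulCLM n a c (f y ξ₁)) with hL
      have hLval : ∀ M : Matrix (Fin a) (Fin c) ℂ, L M = f y ξ₁ * M * f' ξ₃ z := fun M => by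
        rw [hL]; rfl
      calc (∫ ξ₂ in Iic (0:ℝ),
              f y ξ₁ * deriv (fun x' => h (ξ₁ + ξ₂ + x') * h' (ξ₂ + ξ₃ + x')) x * f' ξ₃ z)
          = ∫ ξ₂ in Iic (0:ℝ), L (D ξ₁ ξ₂ ξ₃) := by
            refine integral_congr_ae (Filter.Eventually.of_forall fun ξ₂ => ?_)
            simp only [hLval, derivx]
        _ = L (∫ ξ₂ in Iic (0:ℝ), D ξ₁ ξ₂ ξ₃) := L.integral_comp_comm (hDint ξ₁ ξ₃)
        _ = f y ξ₁ * (h (ξ₁ + x) * h' (ξ₃ + x)) * f' ξ₃ z := by rw [ftc, hLval]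
        _ = (f y ξ₁ * h (ξ₁ + x)) * (h' (ξ₃ + x) * f' ξ₃ z) := by
            rw [← Matrix.mul_assoc, ← Matrix.mul_assoc]
    simp only [step1]
    have hcc := (mulCLM n b m (f y ξ₁ * h (ξ₁ + x))).integral_comp_comm (habs3 z hz)
    exact hcc
  rw [show (∫ ξ₁ in Iic (0:ℝ), ∫ ξ₂ in Iic (0:ℝ), ∫ ξ₃ in Iic (0:ℝ),
          f y ξ₁ * deriv (fun x' => h (ξ₁ + ξ₂ + x') * h' (ξ₂ + ξ₃ + x')) x * f' ξ₃ z)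
      = ∫ ξ₁ in Iic (0:ℝ), (f y ξ₁ * h (ξ₁ + x)) * C from integral_congr_ae inner_eq]
  have hcc := ((mulCLM n b m).flip C).integral_comp_comm (habs2 y hy)
  exact hcc
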